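/- Let R be a commutative ring and A a Hopf algebra over R whose antipode S : A → A is bijective. Let T ∈ Mₙ(A) be a corepresentation matrix, i.e. Δ(T k l) = ∑_p (T k p) ⊗ (T p l) for all k, l, and suppose ε(T k l) = 1 if k = l and 0 otherwise. Then the transpose Tᵀ is a unit of the matrix ring Mₙ(A); explicitly, the matrix (T.map S⁻¹)ᵀ, obtained by applying the inverse of the antipode entrywise and transposing, is a two-sided inverse of Tᵀ. -/

import Mathlib

open TensorProduct Matrix Coalgebra

namespace HopfAux

variable {R A : Type*} [CommRing R] [Ring A] [HopfAlgebra R A]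

local notation "S" => HopfAlgebra.antipode (R := R) (A := A)
local notation "μ" => LinearMap.mul' R A
local notation "Δ" => Coalgebra.comul (R := R) (A := A)

/-- comultiplication on `A ⊗ A` -/
noncomputable def ΔC : (A ⊗[R] A) →ₗ[R] (A ⊗[R] A) ⊗[R] (A ⊗[R] A) :=
  (TensorProduct.tensorTensorTensorComm R A A A A).toLinearMap ∘ₗ
    TensorProduct.map Δ Δ

/-- convolution product on `Hom(A ⊗ A, A)` -/
noncomputable def conv (f g : (A ⊗[R] A) →ₗ[R] A) : (A ⊗[R] A) →ₗ[R] A :=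
  μ ∘ₗ TensorProduct.map f g ∘ₗ ΔC

/-- convolution unit -/
noncomputable def E : (A ⊗[R] A) →ₗ[R] A :=
  μ ∘ₗ TensorProduct.map (Algebra.linearMap R A ∘ₗ Coalgebra.counit)
    (Algebra.linearMap R A ∘ₗ Coalgebra.counit)

lemma E_apply (a b : A) :
    E (a ⊗ₜ[R] b) = algebraMap R A (Coalgebra.counit (R := R) a * Coalgebra.counit (R := R) b) := by
  simp [E, _root_.map_mul]

lemma conv_apply (f g : (A ⊗[R] A) →ₗ[R] A) (a b : A)
    (ra : Coalgebra.Repr R a (A × A)) (rb : Coalgebra.Repr R b (A × A)) :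
    conv f g (a ⊗ₜ[R] b) = ∑ i ∈ ra.index, ∑ j ∈ rb.index,
      f (ra.left i ⊗ₜ[R] rb.left j) * g (ra.right i ⊗ₜ[R] rb.right j) := by
  simp only [conv, ΔC, LinearMap.coe_comp, Function.comp_apply, LinearEquiv.coe_coe,
    TensorProduct.map_tmul, ← ra.eq, ← rb.eq, sum_tmul, tmul_sum, map_sum,
    tensorTensorTensorComm_tmul, LinearMap.mul'_apply]
  rw [Finset.sum_comm]

lemma repr_smul_left {a : A} (ra : Coalgebra.Repr R a (A × A)) :
    ∑ i ∈ ra.index, Coalgebra.counit (R := R) (ra.right i) • ra.left i = a := by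
  have := congrArg (TensorProduct.rid R A) (Coalgebra.sum_tmul_counit_eq ra)
  simpa only [map_sum, TensorProduct.rid_tmul, one_smul] using this

lemma repr_smul_right {a : A} (ra : Coalgebra.Repr R a (A × A)) :
    ∑ i ∈ ra.index, Coalgebra.counit (R := R) (ra.left i) • ra.right i = a := by
  have := congrArg (TensorProduct.lid R A) (Coalgebra.sum_counit_tmul_eq ra)
  simpa only [map_sum, TensorProduct.lid_tmul, one_smul] using this

lemma conv_E_right (f : (A ⊗[R] A) →ₗ[R] A) : conv f E = f := by
  apply TensorProduct.ext'
  intro a b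
  set ra := Coalgebra.Repr.arbitrary R a
  set rb := Coalgebra.Repr.arbitrary R b
  rw [conv_apply f E a b ra rb]
  have key : ∀ i j, f (ra.left i ⊗ₜ[R] rb.left j) * E (ra.right i ⊗ₜ[R] rb.right j)
      = f ((Coalgebra.counit (R := R) (ra.right i) • ra.left i) ⊗ₜ[R]
          (Coalgebra.counit (R := R) (rb.right j) • rb.left j)) := by
    intro i j
    rw [E_apply, ← Algebra.commutes, ← Algebra.smul_def]
    simp [smul_tmul, tmul_smul, smul_smul, mul_comm]
  simp only [key]
  conv_rhs => rw [← repr_smul_left ra, ← repr_smul_left rb]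
  simp only [sum_tmul, tmul_sum, map_sum]
  rw [Finset.sum_comm]

lemma conv_E_left (g : (A ⊗[R] A) →ₗ[R] A) : conv E g = g := by
  apply TensorProduct.ext'
  intro a b
  set ra := Coalgebra.Repr.arbitrary R a
  set rb := Coalgebra.Repr.arbitrary R b
  rw [conv_apply E g a b ra rb]
  have key : ∀ i j, E (ra.left i ⊗ₜ[R] rb.left j) * g (ra.right i ⊗ₜ[R] rb.right j)
      = g ((Coalgebra.counit (R := R) (ra.left i) • ra.right i) ⊗ₜ[R]
          (Coalgebra.counit (R := R) (rb.left j) • rb.right j)) := by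
    intro i j
    rw [E_apply, ← Algebra.smul_def]
    simp [smul_tmul, tmul_smul, smul_smul, mul_comm]
  simp only [key]
  conv_rhs => rw [← repr_smul_right ra, ← repr_smul_right rb]
  simp only [sum_tmul, tmul_sum, map_sum]
  rw [Finset.sum_comm]

end HopfAux

namespace HopfAux2
open HopfAux
variable {R A : Type*} [CommRing R] [Ring A] [HopfAlgebra R A]

local notation "S" => HopfAlgebra.antipode (R := R) (A := A)
local notation "μ" => LinearMap.mul' R A
local notation "Δ" => Coalgebra.comul (R := R) (A := A)

/-- naturality of `tensorTensorTensorComm` -/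
lemma ttt_nat {M N P Q M' N' P' Q' : Type*}
    [AddCommGroup M] [AddCommGroup N] [AddCommGroup P] [AddCommGroup Q]
    [AddCommGroup M'] [AddCommGroup N'] [AddCommGroup P'] [AddCommGroup Q']
    [Module R M] [Module R N] [Module R P] [Module R Q]
    [Module R M'] [Module R N'] [Module R P'] [Module R Q']
    (f : M →ₗ[R] M') (g : N →ₗ[R] N') (h : P →ₗ[R] P') (k : Q →ₗ[R] Q') :
    TensorProduct.map (TensorProduct.map f h) (TensorProduct.map g k) ∘ₗ
        (TensorProduct.tensorTensorTensorComm R M N P Q).toLinearMap =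
      (TensorProduct.tensorTensorTensorComm R M' N' P' Q').toLinearMap ∘ₗ
        TensorProduct.map (TensorProduct.map f g) (TensorProduct.map h k) := by
  apply TensorProduct.ext_fourfold'
  intro w x y z
  simp

set_option synthInstance.maxHeartbeats 1000000 in
lemma ext_AAA {X : Type*} [AddCommGroup X] [Module R X]
    {f g : (((A ⊗[R] A) ⊗[R] A) ⊗[R] ((A ⊗[R] A) ⊗[R] A)) →ₗ[R] X}
    (H : ∀ x1 x2 x3 y1 y2 y3 : A,
      f (((x1 ⊗ₜ x2) ⊗ₜ x3) ⊗ₜ ((y1 ⊗ₜ y2) ⊗ₜ y3)) =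
        g (((x1 ⊗ₜ x2) ⊗ₜ x3) ⊗ₜ ((y1 ⊗ₜ y2) ⊗ₜ y3))) : f = g := by
  refine TensorProduct.ext' fun u v => ?_
  induction u using TensorProduct.induction_on with
  | zero => simp
  | add a b ha hb => simp [add_tmul, ha, hb]
  | tmul p x3 =>
    induction p using TensorProduct.induction_on with
    | zero => simp [zero_tmul]
    | add a b ha hb => simp [add_tmul, ha, hb]
    | tmul x1 x2 =>
      induction v using TensorProduct.induction_on with
      | zero => simp
      | add a b ha hb => simp [tmul_add, ha, hb]
      | tmul q y3 =>
        induction q using TensorProduct.induction_on with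
        | zero => simp [zero_tmul, tmul_zero]
        | add a b ha hb => simp [add_tmul, tmul_add, ha, hb]
        | tmul y1 y2 => exact H x1 x2 x3 y1 y2 y3

set_option synthInstance.maxHeartbeats 1000000 in
lemma nat1 :
    (ΔC (R := R) (A := A)).rTensor (A ⊗[R] A) ∘ₗ
        (TensorProduct.tensorTensorTensorComm R A A A A).toLinearMap =
      TensorProduct.map (TensorProduct.tensorTensorTensorComm R A A A A).toLinearMap
          LinearMap.id ∘ₗ
        (TensorProduct.tensorTensorTensorComm R (A ⊗[R] A) A (A ⊗[R] A) A).toLinearMap ∘ₗ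
        TensorProduct.map (LinearMap.rTensor A (Coalgebra.comul (R := R) (A := A))) (LinearMap.rTensor A (Coalgebra.comul (R := R) (A := A))) := by
  apply TensorProduct.ext_fourfold'
  intro w x y z
  simp [ΔC]

set_option synthInstance.maxHeartbeats 1000000 in
lemma nat2 :
    (ΔC (R := R) (A := A)).lTensor (A ⊗[R] A) ∘ₗ
        (TensorProduct.tensorTensorTensorComm R A A A A).toLinearMap =
      TensorProduct.map LinearMap.id
          (TensorProduct.tensorTensorTensorComm R A A A A).toLinearMap ∘ₗ
        (TensorProduct.tensorTensorTensorComm R A (A ⊗[R] A) A (A ⊗[R] A)).toLinearMap ∘ₗ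
        TensorProduct.map (LinearMap.lTensor A (Coalgebra.comul (R := R) (A := A))) (LinearMap.lTensor A (Coalgebra.comul (R := R) (A := A))) := by
  apply TensorProduct.ext_fourfold'
  intro w x y z
  simp [ΔC]

set_option synthInstance.maxHeartbeats 1000000 in
lemma perm_eq :
    (TensorProduct.assoc R (A ⊗[R] A) (A ⊗[R] A) (A ⊗[R] A)).toLinearMap ∘ₗ
        TensorProduct.map (TensorProduct.tensorTensorTensorComm R A A A A).toLinearMap
          LinearMap.id ∘ₗ
        (TensorProduct.tensorTensorTensorComm R (A ⊗[R] A) A (A ⊗[R] A) A).toLinearMap =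
      TensorProduct.map LinearMap.id
          (TensorProduct.tensorTensorTensorComm R A A A A).toLinearMap ∘ₗ
        (TensorProduct.tensorTensorTensorComm R A (A ⊗[R] A) A (A ⊗[R] A)).toLinearMap ∘ₗ
        TensorProduct.map (TensorProduct.assoc R A A A).toLinearMap
          (TensorProduct.assoc R A A A).toLinearMap := by
  apply ext_AAA (R := R) (A := A)
    (X := (A ⊗[R] A) ⊗[R] ((A ⊗[R] A) ⊗[R] (A ⊗[R] A)))
  intro x1 x2 x3 y1 y2 y3
  simp

lemma ΔC_tmul (a b : A) :
    ΔC (R := R) (a ⊗ₜ[R] b) =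
      (TensorProduct.tensorTensorTensorComm R A A A A).toLinearMap
        (Coalgebra.comul (R := R) a ⊗ₜ[R] Coalgebra.comul (R := R) b) := by
  simp [ΔC]

set_option synthInstance.maxHeartbeats 1000000 in
lemma coassoc_C :
    (TensorProduct.assoc R (A ⊗[R] A) (A ⊗[R] A) (A ⊗[R] A)).toLinearMap ∘ₗ
        (ΔC (R := R) (A := A)).rTensor (A ⊗[R] A) ∘ₗ ΔC =
      (ΔC (R := R) (A := A)).lTensor (A ⊗[R] A) ∘ₗ ΔC := by
  apply TensorProduct.ext'
  intro a b
  have h1 := LinearMap.congr_fun (nat1 (R := R) (A := A))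
    (Coalgebra.comul (R := R) a ⊗ₜ[R] Coalgebra.comul (R := R) b)
  have h2 := LinearMap.congr_fun (nat2 (R := R) (A := A))
    (Coalgebra.comul (R := R) a ⊗ₜ[R] Coalgebra.comul (R := R) b)
  have h3 := LinearMap.congr_fun (perm_eq (R := R) (A := A))
    ((LinearMap.rTensor A (Coalgebra.comul (R := R) (A := A))) (Coalgebra.comul (R := R) a) ⊗ₜ[R]
      (LinearMap.rTensor A (Coalgebra.comul (R := R) (A := A))) (Coalgebra.comul (R := R) b))
  simp only [LinearMap.coe_comp, Function.comp_apply, TensorProduct.map_tmul] at h1 h2 h3 ⊢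
  rw [ΔC_tmul a b, h1, h3, h2]
  simp


set_option synthInstance.maxHeartbeats 1000000 in
lemma conv_assoc (f g h : (A ⊗[R] A) →ₗ[R] A) :
    conv f (conv g h) = conv (conv f g) h := by
  set K1 : (A ⊗[R] A) ⊗[R] ((A ⊗[R] A) ⊗[R] (A ⊗[R] A)) →ₗ[R] A :=
    LinearMap.mul' R A ∘ₗ
      LinearMap.lTensor A (LinearMap.mul' R A ∘ₗ TensorProduct.map g h) ∘ₗ
      LinearMap.rTensor ((A ⊗[R] A) ⊗[R] (A ⊗[R] A)) f with hK1
  set K2 : ((A ⊗[R] A) ⊗[R] (A ⊗[R] A)) ⊗[R] (A ⊗[R] A) →ₗ[R] A :=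
    LinearMap.mul' R A ∘ₗ
      LinearMap.lTensor A h ∘ₗ
      LinearMap.rTensor (A ⊗[R] A) (LinearMap.mul' R A ∘ₗ TensorProduct.map f g) with hK2
  have e1 : LinearMap.mul' R A ∘ₗ TensorProduct.map f (conv g h)
      = K1 ∘ₗ (ΔC (R := R) (A := A)).lTensor (A ⊗[R] A) := by
    apply TensorProduct.ext'
    intro u v
    simp [hK1, conv]
  have e2 : LinearMap.mul' R A ∘ₗ TensorProduct.map (conv f g) h
      = K2 ∘ₗ (ΔC (R := R) (A := A)).rTensor (A ⊗[R] A) := by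
    apply TensorProduct.ext'
    intro u v
    simp [hK2, conv]
  have e3 : K1 ∘ₗ (TensorProduct.assoc R (A ⊗[R] A) (A ⊗[R] A) (A ⊗[R] A)).toLinearMap
      = K2 := by
    apply TensorProduct.ext_threefold
    intro u v w
    simp [hK1, hK2, mul_assoc]
  apply LinearMap.ext
  intro x
  have h1 := LinearMap.congr_fun e1 (ΔC (R := R) (A := A) x)
  have h2 := LinearMap.congr_fun e2 (ΔC (R := R) (A := A) x)
  have h3 := LinearMap.congr_fun (coassoc_C (R := R) (A := A)) x
  have h4 := LinearMap.congr_fun e3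
    ((ΔC (R := R) (A := A)).rTensor (A ⊗[R] A) (ΔC (R := R) (A := A) x))
  simp only [LinearMap.coe_comp, Function.comp_apply, LinearEquiv.coe_coe] at h1 h2 h3 h4
  show LinearMap.mul' R A (TensorProduct.map f (conv g h) (ΔC (R := R) (A := A) x))
      = LinearMap.mul' R A (TensorProduct.map (conv f g) h (ΔC (R := R) (A := A) x))
  rw [h1, ← h3, h4, ← h2]

lemma comul_mul_expand (a b : A) (ra : Coalgebra.Repr R a (A × A)) (rb : Coalgebra.Repr R b (A × A)) :
    Coalgebra.comul (R := R) (a * b) = ∑ i ∈ ra.index, ∑ j ∈ rb.index,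
      (ra.left i * rb.left j) ⊗ₜ[R] (ra.right i * rb.right j) := by
  rw [show Coalgebra.comul (R := R) (a * b)
      = Coalgebra.comul (R := R) a * Coalgebra.comul (R := R) b from Bialgebra.comul_mul a b,
    ← ra.eq, ← rb.eq, Finset.sum_mul_sum]
  simp [Algebra.TensorProduct.tmul_mul_tmul]

lemma conv_FM :
    conv (HopfAlgebra.antipode (R := R) (A := A) ∘ₗ LinearMap.mul' R A) (LinearMap.mul' R A)
      = E := by
  apply TensorProduct.ext'
  intro a b
  set ra := Coalgebra.Repr.arbitrary R a
  set rb := Coalgebra.Repr.arbitrary R b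
  rw [conv_apply _ _ a b ra rb, E_apply]
  have key := HopfAlgebra.mul_antipode_rTensor_comul_apply (R := R) (a * b)
  rw [comul_mul_expand a b ra rb] at key
  simp only [map_sum, LinearMap.rTensor_tmul, LinearMap.mul'_apply] at key
  simp only [LinearMap.coe_comp, Function.comp_apply, LinearMap.mul'_apply]
  rw [key, ← Bialgebra.counit_mul]

lemma conv_MG :
    conv (LinearMap.mul' R A)
        (LinearMap.mul' R A ∘ₗ
          TensorProduct.map (HopfAlgebra.antipode (R := R) (A := A))
            (HopfAlgebra.antipode (R := R) (A := A)) ∘ₗ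
          (TensorProduct.comm R A A).toLinearMap)
      = E := by
  apply TensorProduct.ext'
  intro a b
  set ra := Coalgebra.Repr.arbitrary R a
  set rb := Coalgebra.Repr.arbitrary R b
  rw [conv_apply _ _ a b ra rb, E_apply]
  have ha := HopfAlgebra.sum_mul_antipode_eq_algebraMap_counit ra
  have hb := HopfAlgebra.sum_mul_antipode_eq_algebraMap_counit rb
  calc ∑ i ∈ ra.index, ∑ j ∈ rb.index,
        LinearMap.mul' R A (ra.left i ⊗ₜ[R] rb.left j) *
          (LinearMap.mul' R A ∘ₗ
            TensorProduct.map (HopfAlgebra.antipode (R := R) (A := A))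
              (HopfAlgebra.antipode (R := R) (A := A)) ∘ₗ
            (TensorProduct.comm R A A).toLinearMap) (ra.right i ⊗ₜ[R] rb.right j)
      = ∑ i ∈ ra.index, ∑ j ∈ rb.index,
          ra.left i * ((rb.left j * HopfAlgebra.antipode (R := R) (rb.right j)) *
            HopfAlgebra.antipode (R := R) (ra.right i)) := by
        refine Finset.sum_congr rfl fun i _ => Finset.sum_congr rfl fun j _ => ?_
        simp only [LinearMap.coe_comp, Function.comp_apply, LinearEquiv.coe_coe,
          TensorProduct.comm_tmul, TensorProduct.map_tmul, LinearMap.mul'_apply]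
        rw [mul_assoc, mul_assoc]
    _ = ∑ i ∈ ra.index, ra.left i *
          ((algebraMap R A (Coalgebra.counit (R := R) b)) *
            HopfAlgebra.antipode (R := R) (ra.right i)) := by
        refine Finset.sum_congr rfl fun i _ => ?_
        rw [← Finset.mul_sum, ← Finset.sum_mul, hb]
    _ = (∑ i ∈ ra.index, ra.left i * HopfAlgebra.antipode (R := R) (ra.right i)) *
          algebraMap R A (Coalgebra.counit (R := R) b) := by
        rw [Finset.sum_mul]
        refine Finset.sum_congr rfl fun i _ => ?_
        rw [Algebra.commutes, mul_assoc]
    _ = algebraMap R A (Coalgebra.counit (R := R) a * Coalgebra.counit (R := R) b) := by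
        rw [ha, _root_.map_mul]

lemma antipode_one_eq : HopfAlgebra.antipode (R := R) (A := A) 1 = 1 := by
  simpa using HopfAlgebra.sum_antipode_mul_eq_algebraMap_counit
    (⟨({0} : Finset ℕ), fun _ => (1 : A), fun _ => (1 : A), by
      simp [← Algebra.TensorProduct.one_def]⟩ : Coalgebra.Repr R (1 : A) ℕ)

theorem antipode_mul_antidistrib (a b : A) :
    HopfAlgebra.antipode (R := R) (a * b)
      = HopfAlgebra.antipode (R := R) b * HopfAlgebra.antipode (R := R) a := by
  have main : HopfAlgebra.antipode (R := R) (A := A) ∘ₗ LinearMap.mul' R A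
      = LinearMap.mul' R A ∘ₗ
          TensorProduct.map (HopfAlgebra.antipode (R := R) (A := A))
            (HopfAlgebra.antipode (R := R) (A := A)) ∘ₗ
          (TensorProduct.comm R A A).toLinearMap := by
    calc HopfAlgebra.antipode (R := R) (A := A) ∘ₗ LinearMap.mul' R A
        = conv (HopfAlgebra.antipode (R := R) (A := A) ∘ₗ LinearMap.mul' R A) E :=
          (conv_E_right _).symm
      _ = conv (HopfAlgebra.antipode (R := R) (A := A) ∘ₗ LinearMap.mul' R A)
            (conv (LinearMap.mul' R A)
              (LinearMap.mul' R A ∘ₗ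
                TensorProduct.map (HopfAlgebra.antipode (R := R) (A := A))
                  (HopfAlgebra.antipode (R := R) (A := A)) ∘ₗ
                (TensorProduct.comm R A A).toLinearMap)) := by rw [conv_MG]
      _ = conv (conv (HopfAlgebra.antipode (R := R) (A := A) ∘ₗ LinearMap.mul' R A)
            (LinearMap.mul' R A))
            (LinearMap.mul' R A ∘ₗ
              TensorProduct.map (HopfAlgebra.antipode (R := R) (A := A))
                (HopfAlgebra.antipode (R := R) (A := A)) ∘ₗ
              (TensorProduct.comm R A A).toLinearMap) := conv_assoc _ _ _
      _ = conv E (LinearMap.mul' R A ∘ₗ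
              TensorProduct.map (HopfAlgebra.antipode (R := R) (A := A))
                (HopfAlgebra.antipode (R := R) (A := A)) ∘ₗ
              (TensorProduct.comm R A A).toLinearMap) := by rw [conv_FM]
      _ = _ := conv_E_left _
  have := LinearMap.congr_fun main (a ⊗ₜ[R] b)
  simpa using this

end HopfAux2

/-- If `T` is a corepresentation matrix over a Hopf algebra with bijective antipode, whose
entrywise counit is the identity matrix, then the transpose `Tᵀ` is invertible: applying
the inverse of the antipode entrywise and transposing yields a two-sided inverse of `Tᵀ`. -/
theorem transpose_isUnit_of_bijective_antipode (R A : Type*) [CommRing R] [Ring A]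
    [HopfAlgebra R A] (hbij : Function.Bijective (HopfAlgebra.antipode (R := R) (A := A)))
    (n : ℕ) (T : Matrix (Fin n) (Fin n) A)
    (hT : ∀ k l, Coalgebra.comul (R := R) (T k l) = ∑ p : Fin n, T k p ⊗ₜ[R] T p l)
    (hε : ∀ k l, Coalgebra.counit (R := R) (T k l) = if k = l then 1 else 0) :
    IsUnit Tᵀ ∧
      (T.map (Function.invFun (HopfAlgebra.antipode (R := R) (A := A))))ᵀ * Tᵀ = 1 ∧
      Tᵀ * (T.map (Function.invFun (HopfAlgebra.antipode (R := R) (A := A))))ᵀ = 1 := by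
  classical
  set S' : A → A := Function.invFun (⇑(HopfAlgebra.antipode (R := R) (A := A))) with hS'
  have hSS' : ∀ x, HopfAlgebra.antipode (R := R) (S' x) = x := fun x =>
    Function.rightInverse_invFun hbij.2 x
  have hinj : Function.Injective ⇑(HopfAlgebra.antipode (R := R) (A := A)) := hbij.1
  have ax1 : ∀ k l, ∑ p : Fin n, HopfAlgebra.antipode (R := R) (T k p) * T p l
      = if k = l then (1 : A) else 0 := by
    intro k l
    have key := HopfAlgebra.mul_antipode_rTensor_comul_apply (R := R) (T k l)
    rw [hT k l] at key
    simp only [map_sum, LinearMap.rTensor_tmul, LinearMap.mul'_apply] at key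
    rw [key, hε k l]
    simp [apply_ite (algebraMap R A)]
  have ax2 : ∀ k l, ∑ p : Fin n, T k p * HopfAlgebra.antipode (R := R) (T p l)
      = if k = l then (1 : A) else 0 := by
    intro k l
    have key := HopfAlgebra.mul_antipode_lTensor_comul_apply (R := R) (T k l)
    rw [hT k l] at key
    simp only [map_sum, LinearMap.lTensor_tmul, LinearMap.mul'_apply] at key
    rw [key, hε k l]
    simp [apply_ite (algebraMap R A)]
  have Sdelta : ∀ k l : Fin n,
      HopfAlgebra.antipode (R := R) (if k = l then (1 : A) else 0)
        = if k = l then (1 : A) else 0 := by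
    intro k l
    split
    · exact HopfAux2.antipode_one_eq
    · simp
  have hleft : (T.map S')ᵀ * Tᵀ = 1 := by
    ext k l
    rw [Matrix.mul_apply, Matrix.one_apply]
    apply hinj
    rw [map_sum, Finset.sum_congr rfl (fun p _ => by
      rw [Matrix.transpose_apply, Matrix.transpose_apply, Matrix.map_apply,
        HopfAux2.antipode_mul_antidistrib _ _, hSS']), ax1 l k, Sdelta k l]
    rcases eq_or_ne k l with h | h
    · simp [h]
    · simp [h, Ne.symm h]
  have hright : Tᵀ * (T.map S')ᵀ = 1 := by
    ext k l
    rw [Matrix.mul_apply, Matrix.one_apply]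
    apply hinj
    rw [map_sum, Finset.sum_congr rfl (fun p _ => by
      rw [Matrix.transpose_apply, Matrix.transpose_apply, Matrix.map_apply,
        HopfAux2.antipode_mul_antidistrib _ _, hSS']), ax2 l k, Sdelta k l]
    rcases eq_or_ne k l with h | h
    · simp [h]
    · simp [h, Ne.symm h]
  exact ⟨⟨⟨Tᵀ, (T.map S')ᵀ, hright, hleft⟩, rfl⟩, hleft, hright⟩
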